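/- Let H : X → X be a homeomorphism of a compact metric space. Suppose that for any nonempty open sets U, V ⊂ X there is l > 0 such that H^l(U) ∩ U ≠ ∅ and H^l(U) ∩ V ≠ ∅. If additionally H is topologically transitive, then H is topologically weakly mixing, i.e., H × H is topologically transitive. -/
import Mathlib


/-- Topological transitivity: for all nonempty open `U, V` there is `n > 0`
with `g^[n](U) ∩ V ≠ ∅`. -/
def IsTransitiveMap {X : Type*} [TopologicalSpace X] (g : X → X) : Prop :=
  ∀ U V : Set X, IsOpen U → IsOpen V → U.Nonempty → V.Nonempty →
    ∃ n : ℕ, 0 < n ∧ (g^[n] '' U ∩ V).Nonempty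

/-- Topological weak mixing: the product system `g × g` is topologically transitive. -/
def IsWeaklyMixing {X : Type*} [TopologicalSpace X] (g : X → X) : Prop :=
  ∀ U₁ V₁ U₂ V₂ : Set X, IsOpen U₁ → IsOpen V₁ → IsOpen U₂ → IsOpen V₂ →
    U₁.Nonempty → V₁.Nonempty → U₂.Nonempty → V₂.Nonempty →
    ∃ n : ℕ, 0 < n ∧ (g^[n] '' U₁ ∩ V₁).Nonempty ∧ (g^[n] '' U₂ ∩ V₂).Nonempty

/-- Banks' criterion, as used in Theorem 5.6: If a homeomorphism `H` of a
compact metric space is topologically transitive and for any nonempty open `U, V` there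
is `l > 0` with `H^l(U) ∩ U ≠ ∅` and `H^l(U) ∩ V ≠ ∅`, then `H` is topologically
weakly mixing. -/
theorem pseudo_suspension_stmt19
    {X : Type*} [MetricSpace X] [CompactSpace X]
    (H : X → X) (hc : Continuous H) (hbij : Function.Bijective H)
    (hbanks : ∀ U V : Set X, IsOpen U → IsOpen V → U.Nonempty → V.Nonempty →
      ∃ l : ℕ, 0 < l ∧ (H^[l] '' U ∩ U).Nonempty ∧ (H^[l] '' U ∩ V).Nonempty)
    (htrans : IsTransitiveMap H) :
    IsWeaklyMixing H := by
  have hcont : ∀ m : ℕ, Continuous (H^[m]) := fun m => hc.iterate m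
  have hsurj : ∀ m : ℕ, Function.Surjective (H^[m]) := fun m => hbij.2.iterate m
  -- The 3-set lemma: one time `n` makes `H^[n] '' U` meet both `V₁` and `V₂`.
  have L : ∀ U V₁ V₂ : Set X, IsOpen U → IsOpen V₁ → IsOpen V₂ →
      U.Nonempty → V₁.Nonempty → V₂.Nonempty →
      ∃ n : ℕ, 0 < n ∧ (H^[n] '' U ∩ V₁).Nonempty ∧ (H^[n] '' U ∩ V₂).Nonempty := by
    intro U V₁ V₂ hU hV₁ hV₂ hUne hV₁ne hV₂ne
    obtain ⟨m, hm, z, ⟨x₀, hx₀U, hx₀⟩, hzV₁⟩ := htrans U V₁ hU hV₁ hUne hV₁ne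
    set U' : Set X := U ∩ (H^[m]) ⁻¹' V₁ with hU'def
    have hU'open : IsOpen U' := hU.inter ((hV₁).preimage (hcont m))
    have hU'ne : U'.Nonempty := ⟨x₀, hx₀U, by simpa [hx₀] using hzV₁⟩
    have hWopen : IsOpen ((H^[m]) ⁻¹' V₂) := hV₂.preimage (hcont m)
    have hWne : ((H^[m]) ⁻¹' V₂).Nonempty := by
      obtain ⟨v, hv⟩ := hV₂ne
      obtain ⟨w, hw⟩ := hsurj m v
      exact ⟨w, by simp [Set.mem_preimage, hw, hv]⟩
    obtain ⟨l, hl, ⟨a, ⟨xa, hxaU', hxa⟩, haU'⟩, ⟨b, ⟨xb, hxbU', hxb⟩, hbW⟩⟩ :=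
      hbanks U' ((H^[m]) ⁻¹' V₂) hU'open hWopen hU'ne hWne
    refine ⟨m + l, by omega, ?_, ?_⟩
    · refine ⟨H^[m] a, ⟨xa, hxaU'.1, ?_⟩, haU'.2⟩
      rw [Function.iterate_add_apply, hxa]
    · refine ⟨H^[m] b, ⟨xb, hxbU'.1, ?_⟩, hbW⟩
      rw [Function.iterate_add_apply, hxb]
  -- Main argument.
  intro U₁ V₁ U₂ V₂ hU₁ hV₁ hU₂ hV₂ hU₁ne hV₁ne hU₂ne hV₂ne
  obtain ⟨m, hm, z, ⟨x₀, hx₀U₂, hx₀⟩, hzU₁⟩ := htrans U₂ U₁ hU₂ hU₁ hU₂ne hU₁ne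
  set U₃ : Set X := U₂ ∩ (H^[m]) ⁻¹' U₁ with hU₃def
  have hU₃open : IsOpen U₃ := hU₂.inter (hU₁.preimage (hcont m))
  have hU₃ne : U₃.Nonempty := ⟨x₀, hx₀U₂, by simpa [hx₀] using hzU₁⟩
  have hWopen : IsOpen ((H^[m]) ⁻¹' V₁) := hV₁.preimage (hcont m)
  have hWne : ((H^[m]) ⁻¹' V₁).Nonempty := by
    obtain ⟨v, hv⟩ := hV₁ne
    obtain ⟨w, hw⟩ := hsurj m v
    exact ⟨w, by simp [Set.mem_preimage, hw, hv]⟩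
  obtain ⟨n, hn, ⟨a, ⟨xa, hxaU₃, hxa⟩, haW⟩, ⟨b, ⟨xb, hxbU₃, hxb⟩, hbV₂⟩⟩ :=
    L U₃ ((H^[m]) ⁻¹' V₁) V₂ hU₃open hWopen hV₂ hU₃ne hWne hV₂ne
  refine ⟨n, hn, ?_, ?_⟩
  · -- witness for `H^[n] '' U₁ ∩ V₁` : the point `H^[m] xa ∈ U₁`.
    refine ⟨H^[m] a, ⟨H^[m] xa, hxaU₃.2, ?_⟩, haW⟩
    rw [← Function.iterate_add_apply, Nat.add_comm, Function.iterate_add_apply, hxa]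
  · exact ⟨b, ⟨xb, hxbU₃.1, hxb⟩, hbV₂⟩
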